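/- Suppose (H1) and (H2) hold with β > 0. Let φ̄ ∈ Γ be an upper solution and φ̲ a lower solution of −u'(t) + f(u_t) = 0 satisfying (C1) 0 ≤ φ̲(t) ≤ φ̄(t) ≤ K for all t ∈ ℝ, and (C3) t ↦ e^{βt}(φ̄(t) − φ̲(t)) is non-decreasing on ℝ. Define x₁(t) = ∫_{−∞}^{t} e^{−β(t−s)} H(φ̄)(s) ds. Then x₁ is itself an upper solution of −u'(t) + f(u_t) = 0; indeed, x₁ is differentiable and −x₁'(t) + f((x₁)_t) ≤ 0 for all t ∈ ℝ. -/

import Mathlib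

open Real Filter MeasureTheory

/-- The segment `u_t ∈ C([−τ,0],ℝ)` of a function `u : ℝ → ℝ`, `u_t(s) = u(t+s)`. -/
def seg (τ : ℝ) (u : ℝ → ℝ) (t : ℝ) : Set.Icc (-τ) (0 : ℝ) → ℝ :=
  fun s => u (t + s.1)

-- continuity of t ↦ f (seg τ u t)
lemma seg_f_continuous {τ : ℝ} (f : (Set.Icc (-τ) (0 : ℝ) → ℝ) → ℝ)
    (hf : Continuous fun φ : C(Set.Icc (-τ) (0 : ℝ), ℝ) => f ⇑φ)
    {u : ℝ → ℝ} (hu : Continuous u) : Continuous (fun t => f (seg τ u t)) := by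
  let P : C(ℝ × Set.Icc (-τ) (0:ℝ), ℝ) :=
    ⟨fun p => u (p.1 + p.2.1), hu.comp (continuous_fst.add (continuous_subtype_val.comp continuous_snd))⟩
  have : (fun t => f (seg τ u t)) = (fun φ : C(Set.Icc (-τ) (0:ℝ), ℝ) => f ⇑φ) ∘ ⇑P.curry := by
    funext t; rfl
  rw [this]
  exact hf.comp (map_continuous P.curry)

-- integrability of exp (β * s) on Iic t
lemma exp_integrableOn_Iic {β : ℝ} (hβ : 0 < β) (t : ℝ) :
    IntegrableOn (fun s : ℝ => Real.exp (β * s)) (Set.Iic t) := by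
  have h1 : IntegrableOn (fun x : ℝ => Real.exp (-β * x)) (Set.Ioi (-t)) :=
    exp_neg_integrableOn_Ioi (-t) hβ
  have h2 := (MeasurePreserving.integrableOn_comp_preimage
    (Measure.measurePreserving_neg (volume : Measure ℝ))
    (Homeomorph.neg ℝ).measurableEmbedding).2 h1
  have hpre : (Neg.neg : ℝ → ℝ) ⁻¹' Set.Ioi (-t) = Set.Iio t := by
    ext x; simp [neg_lt]
  rw [hpre] at h2
  have h3 : IntegrableOn (fun s : ℝ => Real.exp (β * s)) (Set.Iio t) := by
    refine h2.congr_fun (fun s _ => ?_) measurableSet_Iio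
    simp [Function.comp, neg_mul]
  exact h3.congr_set_ae Iio_ae_eq_Iic.symm

lemma integral_exp_Iic_mul {β : ℝ} (hβ : 0 < β) (t : ℝ) :
    ∫ s in Set.Iic t, Real.exp (β * s) = β⁻¹ * Real.exp (β * t) := by
  have hderiv : ∀ x ∈ Set.Iic t, HasDerivAt (fun s : ℝ => β⁻¹ * Real.exp (β * s))
      (Real.exp (β * x)) x := by
    intro x _
    have h1 : HasDerivAt (fun s : ℝ => β * s) β x := by
      simpa using (hasDerivAt_id x).const_mul β
    have h2 := h1.exp
    have h3 := h2.const_mul β⁻¹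
    refine h3.congr_deriv ?_
    field_simp
  have hlim : Tendsto (fun s : ℝ => β⁻¹ * Real.exp (β * s)) atBot (nhds 0) := by
    have : Tendsto (fun s : ℝ => β * s) atBot atBot := tendsto_id.const_mul_atBot hβ
    simpa using (Real.tendsto_exp_atBot.comp this).const_mul β⁻¹
  have := integral_Iic_of_hasDerivAt_of_tendsto' hderiv (exp_integrableOn_Iic hβ t) hlim
  rw [this]; ring

lemma monotone_integral_le {m d h : ℝ → ℝ} (hm : Monotone m) (hmc : Continuous m)
    (hd : ∀ᵐ t ∂(volume : Measure ℝ), HasDerivAt m (d t) t)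
    (hle : ∀ᵐ t ∂(volume : Measure ℝ), h t ≤ d t)
    {a b : ℝ} (hab : a ≤ b) (hint : IntegrableOn h (Set.Ioc a b)) :
    ∫ t in Set.Ioc a b, h t ≤ m b - m a := by
  set μ := hm.stieltjesFunction.measure with hμdef
  have key : ∀ x : ℝ, hm.stieltjesFunction x = m x := by
    intro x
    rw [hm.stieltjesFunction_eq]
    exact rightLim_eq_of_tendsto
      (hmc.continuousAt.continuousWithinAt)
  have hr := hm.ae_hasDerivAt
  set r : ℝ → ℝ := fun t => (μ.rnDeriv volume t).toReal with hrdef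
  have hμIoc : μ (Set.Ioc a b) ≠ ⊤ := by
    rw [hμdef, StieltjesFunction.measure_Ioc]; exact ENNReal.ofReal_ne_top
  have hrint : IntegrableOn r (Set.Ioc a b) volume :=
    Measure.integrableOn_toReal_rnDeriv hμIoc
  have step1 : ∫ t in Set.Ioc a b, h t ≤ ∫ t in Set.Ioc a b, r t := by
    refine integral_mono_ae hint hrint (ae_restrict_of_ae ?_)
    filter_upwards [hle, hd, hr] with t h1 h2 h3
    exact h1.trans (h2.unique h3).le
  have step2 : ∫ t in Set.Ioc a b, r t ≤ (μ (Set.Ioc a b)).toReal :=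
    Measure.setIntegral_toReal_rnDeriv_le hμIoc
  have step3 : (μ (Set.Ioc a b)).toReal = m b - m a := by
    rw [hμdef, StieltjesFunction.measure_Ioc, ENNReal.toReal_ofReal]
    · rw [key, key]
    · rw [key, key]; exact sub_nonneg.2 (hm hab)
  linarith


/-- Under (H1) and (H2) with `β > 0`, if `φ̄ ∈ Γ` is an upper solution of
`−u'(t) + f(u_t) = 0`, `φ̲` is a lower solution satisfying (C1) and (C3), and
`x₁(t) = ∫_{−∞}^t e^{−β(t−s)} H(φ̄)(s) ds`, then `x₁` is itself an upper
solution: `x₁` is differentiable and `−x₁'(t) + f((x₁)_t) ≤ 0` for all `t`. -/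
theorem x1_is_upper_solution
    (τ : ℝ) (hτ : 0 < τ)
    (f : (Set.Icc (-τ) (0 : ℝ) → ℝ) → ℝ)
    (hf : Continuous fun φ : C(Set.Icc (-τ) (0 : ℝ), ℝ) => f ⇑φ)
    (K : ℝ) (hK : 0 < K)
    -- (H1)
    (hH1₀ : f (fun _ => (0 : ℝ)) = 0) (hH1K : f (fun _ => K) = 0)
    (hH1ne : ∀ u : ℝ, 0 < u → u < K → f (fun _ => u) ≠ 0)
    (β : ℝ) (hβ : 0 < β)
    -- (H2)
    (hH2 : ∀ φ ψ : Set.Icc (-τ) (0 : ℝ) → ℝ, Continuous φ → Continuous ψ →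
      (∀ s, 0 ≤ ψ s ∧ ψ s ≤ φ s ∧ φ s ≤ K) →
      Monotone (fun s : Set.Icc (-τ) (0 : ℝ) => Real.exp (β * s.1) * (φ s - ψ s)) →
      0 ≤ f φ - f ψ +
        β * (φ ⟨0, Set.right_mem_Icc.mpr (neg_nonpos.mpr hτ.le)⟩ -
             ψ ⟨0, Set.right_mem_Icc.mpr (neg_nonpos.mpr hτ.le)⟩))
    -- φ̄ ∈ Γ
    (φb : ℝ → ℝ) (hφbc : Continuous φb) (hφbm : Monotone φb)
    (hφb₀ : Tendsto φb atBot (nhds 0)) (hφbK : Tendsto φb atTop (nhds K))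
    (hφbΓ : ∀ s : ℝ, 0 < s →
      Monotone fun t : ℝ => Real.exp (β * t) * (φb (t + s) - φb t))
    -- φ̄ is an upper solution
    (hup : ∃ D : ℝ → ℝ, (∀ᵐ t ∂(volume : Measure ℝ), HasDerivAt φb (D t) t) ∧
      (∃ M : ℝ, ∀ᵐ t ∂(volume : Measure ℝ), |D t| ≤ M) ∧
      (∀ᵐ t ∂(volume : Measure ℝ), f (seg τ φb t) ≤ D t))
    -- φ̲ is a lower solution satisfying (C1) and (C3)
    (φl : ℝ → ℝ) (hφlc : Continuous φl)
    (hlow : ∃ D : ℝ → ℝ, (∀ᵐ t ∂(volume : Measure ℝ), HasDerivAt φl (D t) t) ∧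
      (∃ M : ℝ, ∀ᵐ t ∂(volume : Measure ℝ), |D t| ≤ M) ∧
      (∀ᵐ t ∂(volume : Measure ℝ), D t ≤ f (seg τ φl t)))
    (hC1 : ∀ t : ℝ, 0 ≤ φl t ∧ φl t ≤ φb t ∧ φb t ≤ K)
    (hC3 : Monotone fun t : ℝ => Real.exp (β * t) * (φb t - φl t))
    -- x₁
    (x₁ : ℝ → ℝ)
    (hx₁ : ∀ t : ℝ, x₁ t =
      ∫ s in Set.Iic t, Real.exp (-β * (t - s)) * (f (seg τ φb s) + β * φb s)) :
    ∀ t : ℝ, DifferentiableAt ℝ x₁ t ∧ f (seg τ x₁ t) ≤ deriv x₁ t := by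
  obtain ⟨D, hD, ⟨M, hM⟩, hfD⟩ := hup
  clear hlow hφb₀ hφbK hφbΓ hH1K hH1ne
  have hφb0 : ∀ s : ℝ, 0 ≤ φb s := fun s => (hC1 s).1.trans (hC1 s).2.1
  have hφbK' : ∀ s : ℝ, φb s ≤ K := fun s => (hC1 s).2.2
  -- the function H
  set H : ℝ → ℝ := fun s => f (seg τ φb s) + β * φb s with hHdef
  have hHc : Continuous H := (seg_f_continuous f hf hφbc).add (continuous_const.mul hφbc)
  have hsegc : ∀ (u : ℝ → ℝ), Continuous u → ∀ t : ℝ, Continuous (seg τ u t) := by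
    intro u hu t
    exact hu.comp (continuous_const.add continuous_subtype_val)
  have hHnn : ∀ s : ℝ, 0 ≤ H s := by
    intro s
    have h0 := hH2 (seg τ φb s) (fun _ => 0) (hsegc φb hφbc s) continuous_const
      (fun r => ⟨le_refl 0, hφb0 _, hφbK' _⟩)
      (by
        intro r1 r2 h12
        have h12' : (r1 : ℝ) ≤ (r2 : ℝ) := h12
        show Real.exp (β * r1.1) * (seg τ φb s r1 - 0) ≤ Real.exp (β * r2.1) * (seg τ φb s r2 - 0)
        simp only [sub_zero, seg]
        exact mul_le_mul (Real.exp_le_exp.2 (mul_le_mul_of_nonneg_left h12' hβ.le))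
          (hφbm (add_le_add_right h12' s)) (hφb0 _) (Real.exp_pos _).le)
    rw [hH1₀] at h0
    simp only [seg, add_zero, sub_zero] at h0
    simpa [hHdef] using h0
  have hHboundae : ∀ᵐ s ∂(volume : Measure ℝ), H s ≤ M + β * K := by
    filter_upwards [hfD, hM] with s h1 h2
    have : β * φb s ≤ β * K := mul_le_mul_of_nonneg_left (hφbK' s) hβ.le
    have h3 : D s ≤ M := (le_abs_self _).trans h2
    simp only [hHdef]; linarith
  -- the function h = exp (β s) * H s and its primitive J
  set h : ℝ → ℝ := fun s => Real.exp (β * s) * H s with hhdef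
  have hhc : Continuous h := (Real.continuous_exp.comp (continuous_const.mul continuous_id)).mul hHc
  have hhnn : ∀ s : ℝ, 0 ≤ h s := fun s => mul_nonneg (Real.exp_pos _).le (hHnn s)
  have hhboundae : ∀ᵐ s ∂(volume : Measure ℝ), h s ≤ (M + β * K) * Real.exp (β * s) := by
    filter_upwards [hHboundae] with s h1
    rw [mul_comm (M + β * K)]
    exact mul_le_mul_of_nonneg_left h1 (Real.exp_pos _).le
  have hJint : ∀ t : ℝ, IntegrableOn h (Set.Iic t) := by
    intro t
    refine Integrable.mono' (((exp_integrableOn_Iic hβ t)).const_mul (M + β * K))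
      hhc.aestronglyMeasurable.restrict (ae_restrict_of_ae ?_)
    filter_upwards [hhboundae] with s h1
    rw [Real.norm_eq_abs, abs_of_nonneg (hhnn s)]
    exact h1
  set J : ℝ → ℝ := fun t => ∫ s in Set.Iic t, h s with hJdef
  have hJsplit : ∀ a b : ℝ, a ≤ b → J b - J a = ∫ s in Set.Ioc a b, h s := by
    intro a b hab
    have : Set.Iic a ∪ Set.Ioc a b = Set.Iic b := Set.Iic_union_Ioc_eq_Iic hab
    have hu : J b = J a + ∫ s in Set.Ioc a b, h s := by
      rw [hJdef]
      simp only []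
      rw [← this, setIntegral_union (Set.Iic_disjoint_Ioc le_rfl) measurableSet_Ioc
        (hJint a) ((hJint b).mono_set (Set.Ioc_subset_Iic_self))]
    rw [hu]; ring
  -- J is differentiable with derivative h
  have hJrepr : ∀ u : ℝ, J u = J 0 + ∫ s in (0:ℝ)..u, h s := by
    intro u
    rcases le_total (0:ℝ) u with hu | hu
    · rw [intervalIntegral.integral_of_le hu, ← intervalIntegral.integral_of_le hu,
        intervalIntegral.integral_of_le hu, ← hJsplit 0 u hu]; ring
    · rw [intervalIntegral.integral_symm, intervalIntegral.integral_of_le hu, ← hJsplit u 0 hu]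
      ring
  have hJder : ∀ t : ℝ, HasDerivAt J (h t) t := by
    intro t
    have hint : IntervalIntegrable h volume 0 t := by
      apply IntegrableOn.intervalIntegrable
      exact (hJint (max 0 t)).mono_set (fun x hx => hx.2)
    have key := intervalIntegral.integral_hasDerivAt_right hint
      (hhc.stronglyMeasurableAtFilter volume (nhds t)) hhc.continuousAt
    have h2 := key.const_add (J 0)
    exact h2.congr_of_eventuallyEq (Eventually.of_forall fun v => hJrepr v)
  have hJcont : Continuous J := continuous_iff_continuousAt.2 fun t => (hJder t).continuousAt
  have hJnn : ∀ u : ℝ, 0 ≤ J u := fun u =>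
    setIntegral_nonneg measurableSet_Iic (fun s _ => hhnn s)
  -- x₁ in terms of J
  have hx₁J : ∀ t : ℝ, x₁ t = Real.exp (-(β * t)) * J t := by
    intro t
    rw [hx₁ t, hJdef, ← integral_const_mul]
    refine integral_congr_ae (Eventually.of_forall fun s => ?_)
    simp only [hHdef, hhdef]
    rw [show -β * (t - s) = -(β * t) + β * s by ring, Real.exp_add, mul_assoc]
  -- the monotone function m
  set m : ℝ → ℝ := fun u => Real.exp (β * u) * φb u with hmdef
  have hmc : Continuous m :=
    (Real.continuous_exp.comp (continuous_const.mul continuous_id)).mul hφbc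
  have hmm : Monotone m := by
    intro a b hab
    exact mul_le_mul (Real.exp_le_exp.2 (mul_le_mul_of_nonneg_left hab hβ.le)) (hφbm hab)
      (hφb0 a) (Real.exp_pos _).le
  have hmd : ∀ᵐ u ∂(volume : Measure ℝ),
      HasDerivAt m (Real.exp (β * u) * (D u + β * φb u)) u := by
    filter_upwards [hD] with u hu
    have h1 : HasDerivAt (fun v : ℝ => β * v) β u := by
      simpa using (hasDerivAt_id u).const_mul β
    have h2 := (h1.exp).mul hu
    refine h2.congr_deriv ?_
    ring
  have hGmono : Monotone (fun u : ℝ => m u - J u) := by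
    intro a b hab
    have h1 : J b - J a ≤ m b - m a := by
      rw [hJsplit a b hab]
      refine monotone_integral_le hmm hmc hmd ?_ hab
        ((hJint b).mono_set Set.Ioc_subset_Iic_self)
      filter_upwards [hfD] with u hu
      exact mul_le_mul_of_nonneg_left (by simp only [hHdef]; linarith) (Real.exp_pos _).le
    simp only []
    linarith
  -- limits at -∞
  have hexp0 : Tendsto (fun u : ℝ => Real.exp (β * u)) atBot (nhds 0) :=
    Real.tendsto_exp_atBot.comp (tendsto_id.const_mul_atBot hβ)
  have hm0 : Tendsto m atBot (nhds 0) := by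
    have hub : ∀ u, m u ≤ K * Real.exp (β * u) := fun u => by
      rw [mul_comm K]
      exact mul_le_mul_of_nonneg_left (hφbK' u) (Real.exp_pos _).le
    have hlb : ∀ u, 0 ≤ m u := fun u => mul_nonneg (Real.exp_pos _).le (hφb0 u)
    refine tendsto_of_tendsto_of_tendsto_of_le_of_le tendsto_const_nhds ?_ hlb hub
    simpa using hexp0.const_mul K
  have hJub : ∀ u, J u ≤ (M + β * K) * (β⁻¹ * Real.exp (β * u)) := by
    intro u
    have h1 : J u ≤ ∫ s in Set.Iic u, (M + β * K) * Real.exp (β * s) := by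
      refine integral_mono_ae (hJint u) ((exp_integrableOn_Iic hβ u).const_mul _)
        (ae_restrict_of_ae ?_)
      filter_upwards [hhboundae] with s h1
      exact h1
    rwa [integral_const_mul, integral_exp_Iic_mul hβ] at h1
  have hJ0 : Tendsto J atBot (nhds 0) := by
    refine tendsto_of_tendsto_of_tendsto_of_le_of_le tendsto_const_nhds ?_ hJnn hJub
    have := (hexp0.const_mul β⁻¹).const_mul (M + β * K)
    simpa using this
  have hG0 : Tendsto (fun u : ℝ => m u - J u) atBot (nhds 0) := by
    simpa using hm0.sub hJ0
  have hGnn : ∀ u : ℝ, 0 ≤ m u - J u := by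
    intro u
    refine le_of_tendsto hG0 ?_
    filter_upwards [Iic_mem_atBot u] with v hv
    exact hGmono hv
  -- pointwise facts about x₁
  have hx₁nn : ∀ t : ℝ, 0 ≤ x₁ t := fun t => by
    rw [hx₁J t]; exact mul_nonneg (Real.exp_pos _).le (hJnn t)
  have hJle : ∀ t : ℝ, J t ≤ m t := fun t => by have := hGnn t; linarith
  have hexpcancel : ∀ t : ℝ, Real.exp (-(β * t)) * Real.exp (β * t) = 1 := by
    intro t; rw [← Real.exp_add]; simp
  have hx₁le : ∀ t : ℝ, x₁ t ≤ φb t := by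
    intro t
    rw [hx₁J t]
    calc Real.exp (-(β * t)) * J t ≤ Real.exp (-(β * t)) * m t :=
          mul_le_mul_of_nonneg_left (hJle t) (Real.exp_pos _).le
      _ = φb t := by
          show Real.exp (-(β * t)) * (Real.exp (β * t) * φb t) = φb t
          rw [← mul_assoc, hexpcancel, one_mul]
  have hx₁der : ∀ t : ℝ, HasDerivAt x₁ (H t - β * x₁ t) t := by
    intro t
    have h1 : HasDerivAt (fun v : ℝ => -(β * v)) (-β) t := by
      have h0 := ((hasDerivAt_id t).const_mul β).neg
      rw [mul_one] at h0
      exact h0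
    have h2 := (h1.exp).mul (hJder t)
    have h3 := h2.congr_of_eventuallyEq (Eventually.of_forall fun v => hx₁J v)
    refine h3.congr_deriv (Eq.symm ?_)
    have hht : h t = Real.exp (β * t) * H t := rfl
    rw [hx₁J t, hht]
    linear_combination (-(H t)) * hexpcancel t
  have hx₁c : Continuous x₁ := continuous_iff_continuousAt.2 fun u => (hx₁der u).continuousAt
  -- conclusion
  intro t
  have hder := hx₁der t
  refine ⟨hder.differentiableAt, ?_⟩
  rw [hder.deriv]
  have key : ∀ r : ℝ, Real.exp (β * r) * (φb (t + r) - x₁ (t + r)) =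
      Real.exp (-(β * t)) * (m (t + r) - J (t + r)) := by
    intro r
    rw [hx₁J (t + r)]
    show Real.exp (β * r) * (φb (t + r) - Real.exp (-(β * (t + r))) * J (t + r)) =
      Real.exp (-(β * t)) * (Real.exp (β * (t + r)) * φb (t + r) - J (t + r))
    have e1 : Real.exp (-(β * t)) * Real.exp (β * (t + r)) = Real.exp (β * r) := by
      rw [← Real.exp_add]; ring_nf
    have e2 : Real.exp (β * r) * Real.exp (-(β * (t + r))) = Real.exp (-(β * t)) := by
      rw [← Real.exp_add]; ring_nf
    linear_combination (-(φb (t + r))) * e1 + (-(J (t + r))) * e2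
  have hmono : Monotone (fun r : Set.Icc (-τ) (0:ℝ) =>
      Real.exp (β * r.1) * (seg τ φb t r - seg τ x₁ t r)) := by
    intro r1 r2 h12
    have h12' : (r1 : ℝ) ≤ (r2 : ℝ) := h12
    show Real.exp (β * r1.1) * (φb (t + r1.1) - x₁ (t + r1.1)) ≤
      Real.exp (β * r2.1) * (φb (t + r2.1) - x₁ (t + r2.1))
    rw [key r1.1, key r2.1]
    exact mul_le_mul_of_nonneg_left (hGmono (by linarith)) (Real.exp_pos _).le
  have hbounds : ∀ r : Set.Icc (-τ) (0:ℝ),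
      0 ≤ seg τ x₁ t r ∧ seg τ x₁ t r ≤ seg τ φb t r ∧ seg τ φb t r ≤ K :=
    fun r => ⟨hx₁nn _, hx₁le _, hφbK' _⟩
  have hfin := hH2 (seg τ φb t) (seg τ x₁ t) (hsegc φb hφbc t) (hsegc x₁ hx₁c t)
    hbounds hmono
  simp only [seg, add_zero] at hfin
  simp only [hHdef]
  linarith
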